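/- arXiv:2401.10601 — 3 statements merged into one kernel-verified Lean document; each statement's English description precedes it below -/
import Mathlib

section
/- For fixed slot set S, the function H ↦ Φ(S, H) is submodular in H: for all H ⊆ H' ⊆ T and c ∉ H', Φ(S, H ∪ {c}) - Φ(S, H) ≥ Φ(S, H' ∪ {c}) - Φ(S, H'). -/
theorem Phi_submodular_in_tags
    {B T U : Type*} [DecidableEq T] [Fintype U] (q : U → B → T → ℝ)
    (hq : ∀ u b c, 0 ≤ q u b c ∧ q u b c ≤ 1)
    (Φ : Finset B → Finset T → ℝ)
    (hΦ : ∀ (S : Finset B) (H : Finset T),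
      Φ S H = ∑ u : U, (1 - ∏ b ∈ S, ∏ c ∈ H, (1 - q u b c))) :
    ∀ (S : Finset B) (H H' : Finset T), H ⊆ H' → ∀ c : T, c ∉ H' →
      Φ S (insert c H') - Φ S H' ≤ Φ S (insert c H) - Φ S H := by
  intro S H H' hHH' c hc
  have hcH : c ∉ H := fun h => hc (hHH' h)
  rw [hΦ, hΦ, hΦ, hΦ, ← Finset.sum_sub_distrib, ← Finset.sum_sub_distrib]
  apply Finset.sum_le_sum
  intro u _
  have key : ∀ (K : Finset T), c ∉ K →
      (1 - ∏ b ∈ S, ∏ c' ∈ insert c K, (1 - q u b c')) -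
        (1 - ∏ b ∈ S, ∏ c' ∈ K, (1 - q u b c'))
      = (∏ b ∈ S, ∏ c' ∈ K, (1 - q u b c')) * (1 - ∏ b ∈ S, (1 - q u b c)) := by
    intro K hcK
    have h1 : ∀ b ∈ S, ∏ c' ∈ insert c K, (1 - q u b c')
        = (1 - q u b c) * ∏ c' ∈ K, (1 - q u b c') :=
      fun b _ => Finset.prod_insert hcK
    rw [Finset.prod_congr rfl h1, Finset.prod_mul_distrib]
    ring
  rw [key H' hc, key H hcH]
  apply mul_le_mul_of_nonneg_right
  · apply Finset.prod_le_prod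
    · intro b _
      exact Finset.prod_nonneg fun c' _ => by linarith [(hq u b c').1, (hq u b c').2]
    · intro b _
      rw [← Finset.prod_sdiff hHH']
      have h1 : ∏ c' ∈ H' \ H, (1 - q u b c') ≤ 1 :=
        Finset.prod_le_one (fun c' _ => by linarith [(hq u b c').2])
          (fun c' _ => by linarith [(hq u b c').1])
      have h2 : 0 ≤ ∏ c' ∈ H, (1 - q u b c') :=
        Finset.prod_nonneg fun c' _ => by linarith [(hq u b c').2]
      calc (∏ c' ∈ H' \ H, (1 - q u b c')) * ∏ c' ∈ H, (1 - q u b c')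
          ≤ 1 * ∏ c' ∈ H, (1 - q u b c') := mul_le_mul_of_nonneg_right h1 h2
        _ = ∏ c' ∈ H, (1 - q u b c') := one_mul _
  · have : ∏ b ∈ S, (1 - q u b c) ≤ 1 :=
      Finset.prod_le_one (fun b _ => by linarith [(hq u b c).2])
        (fun b _ => by linarith [(hq u b c).1])
    linarith
end

section
/- If f : Finset B → ℝ is monotone submodular with f(∅) = 0, and a sequence S₀ = ∅, S_{i+1} = S_i ∪ {s_{i+1}} satisfies the per-step inequality f(S_{i+1}) - f(S_i) ≥ (1/k)(f(OPT) - f(S_i)) for all 0 ≤ i < k, then f(S_k) ≥ (1 - (1 - 1/k)^k) · f(OPT). -/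
theorem greedy_guarantee
    {B : Type*} [DecidableEq B] (f : Finset B → ℝ)
    (hmono : ∀ S T : Finset B, S ⊆ T → f S ≤ f T)
    (hsub : ∀ S T : Finset B, S ⊆ T → ∀ b : B, b ∉ T →
      f (insert b T) - f T ≤ f (insert b S) - f S)
    (hempty : f ∅ = 0)
    (k : ℕ) (hk : 0 < k) (OPT : Finset B) (hOPT : 0 ≤ f OPT)
    (S : ℕ → Finset B) (s : ℕ → B)
    (hS0 : S 0 = ∅)
    (hstep : ∀ i, i < k → S (i + 1) = insert (s (i + 1)) (S i))
    (hgain : ∀ i, i < k →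
      f (S (i + 1)) - f (S i) ≥ (1 / (k : ℝ)) * (f OPT - f (S i))) :
    f (S k) ≥ (1 - (1 - 1 / (k : ℝ)) ^ k) * f OPT := by
  have hkR : (1:ℝ) ≤ (k:ℝ) := by exact_mod_cast hk
  have h1 : (0:ℝ) ≤ 1 - 1 / (k:ℝ) := by
    have : 1 / (k:ℝ) ≤ 1 := by
      rw [div_le_one (by linarith)]; exact hkR
    linarith
  have key : ∀ i, i ≤ k → f OPT - f (S i) ≤ (1 - 1 / (k:ℝ)) ^ i * f OPT := by
    intro i
    induction i with
    | zero => intro _; simp [hS0, hempty]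
    | succ n ih =>
      intro hn
      have hlt : n < k := hn
      have h2 := ih (le_of_lt hlt)
      have h3 := hgain n hlt
      have h4 : f OPT - f (S (n+1)) ≤ (1 - 1 / (k:ℝ)) * (f OPT - f (S n)) := by
        nlinarith
      calc f OPT - f (S (n+1)) ≤ (1 - 1 / (k:ℝ)) * (f OPT - f (S n)) := h4
      _ ≤ (1 - 1 / (k:ℝ)) * ((1 - 1 / (k:ℝ)) ^ n * f OPT) := by nlinarith
      _ = (1 - 1 / (k:ℝ)) ^ (n+1) * f OPT := by ring
  have := key k le_rfl
  linarith
end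

section
/- Stochastic greedy sampling lemma: let f be monotone submodular, S a current solution, OPT a set of size k with OPT ⊄ S, and let R be a uniformly random subset of B \ S of size r = ⌈(|B|/k) · ln(1/ε)⌉ (with r ≤ |B \ S|). Then the probability that R ∩ (OPT \ S) = ∅ is at most (1 - |OPT \ S|/|B \ S|)^r ≤ e^{-r·|OPT\S|/|B\S|}. -/
lemma descFactorial_mul_pow_le (a n : ℕ) (h : a ≤ n) :
    ∀ r, a.descFactorial r * n ^ r ≤ a ^ r * n.descFactorial r := by
  intro r
  induction r with
  | zero => simp
  | succ r ih =>
    rw [Nat.descFactorial_succ, Nat.descFactorial_succ, pow_succ, pow_succ]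
    have key : (a - r) * n ≤ a * (n - r) := by
      rcases le_or_gt a r with hle | hlt
      · simp [Nat.sub_eq_zero_of_le hle]
      · have hr : r ≤ n := le_of_lt (lt_of_lt_of_le hlt h)
        rw [Nat.sub_mul, Nat.mul_sub]
        have : r * n ≤ a * n := Nat.mul_le_mul_right n (le_of_lt hlt)
        have h2 : a * r ≤ r * n := by
          rw [mul_comm a r]; exact Nat.mul_le_mul_left r h
        omega
    calc (a - r) * a.descFactorial r * (n ^ r * n)
        = (a - r) * n * (a.descFactorial r * n ^ r) := by ring
      _ ≤ a * (n - r) * (a ^ r * n.descFactorial r) :=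
          Nat.mul_le_mul key ih
      _ = a ^ r * a * ((n - r) * n.descFactorial r) := by ring

lemma choose_mul_pow_le (a n : ℕ) (h : a ≤ n) (r : ℕ) :
    a.choose r * n ^ r ≤ a ^ r * n.choose r := by
  have := descFactorial_mul_pow_le a n h r
  rw [Nat.descFactorial_eq_factorial_mul_choose, Nat.descFactorial_eq_factorial_mul_choose] at this
  have h2 : r.factorial * (a.choose r * n ^ r) ≤ r.factorial * (a ^ r * n.choose r) := by
    calc r.factorial * (a.choose r * n ^ r) = r.factorial * a.choose r * n ^ r := by ring
      _ ≤ a ^ r * (r.factorial * n.choose r) := this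
      _ = r.factorial * (a ^ r * n.choose r) := by ring
  exact Nat.le_of_mul_le_mul_left h2 r.factorial_pos

theorem stochastic_sampling_miss_probability
    {B : Type*} [Fintype B] [DecidableEq B]
    (f : Finset B → ℝ)
    (hmono : ∀ S T : Finset B, S ⊆ T → f S ≤ f T)
    (hsub : ∀ S T : Finset B, S ⊆ T → ∀ x : B, x ∉ T →
      f (insert x T) - f T ≤ f (insert x S) - f S)
    (k : ℕ) (hk : 1 ≤ k) (ε : ℝ) (hε : 0 < ε ∧ ε < 1)
    (S OPT : Finset B) (hcard : OPT.card = k) (hnotsub : ¬ OPT ⊆ S)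
    (r : ℕ)
    (hr : r = ⌈((Fintype.card B : ℝ) / (k : ℝ)) * Real.log (1 / ε)⌉₊)
    (hrle : r ≤ ((Finset.univ : Finset B) \ S).card) :
    (((((Finset.univ : Finset B) \ S).powersetCard r).filter
        (fun R => R ∩ (OPT \ S) = ∅)).card : ℝ) /
      (((((Finset.univ : Finset B) \ S)).powersetCard r).card : ℝ)
      ≤ (1 - ((OPT \ S).card : ℝ) / (((Finset.univ : Finset B) \ S).card : ℝ)) ^ r ∧
    (1 - ((OPT \ S).card : ℝ) / (((Finset.univ : Finset B) \ S).card : ℝ)) ^ r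
      ≤ Real.exp (-(r : ℝ) * ((OPT \ S).card : ℝ) /
          (((Finset.univ : Finset B) \ S).card : ℝ)) := by
  classical
  set U : Finset B := (Finset.univ : Finset B) \ S with hU
  set M : Finset B := OPT \ S with hM
  have hMU : M ⊆ U := fun x hx => by
    simp only [hM, Finset.mem_sdiff] at hx
    simp [hU, hx.2]
  set n : ℕ := U.card
  set m : ℕ := M.card
  have hmn : m ≤ n := Finset.card_le_card hMU
  have hMne : M.Nonempty := by
    rcases Finset.not_subset.mp hnotsub with ⟨x, hx1, hx2⟩
    exact ⟨x, by simp [hM, hx1, hx2]⟩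
  have hm1 : 1 ≤ m := Finset.card_pos.mpr hMne
  have hn0 : 0 < n := lt_of_lt_of_le hm1 hmn
  have hnR : (0:ℝ) < (n:ℝ) := by exact_mod_cast hn0
  -- rewrite 1 - m/n
  have hfrac : (1 - (m:ℝ) / (n:ℝ)) = ((n - m : ℕ) : ℝ) / (n:ℝ) := by
    rw [Nat.cast_sub hmn]
    field_simp
  have hfilter : ((U.powersetCard r).filter (fun R => R ∩ M = ∅))
      = (U \ M).powersetCard r := by
    ext R
    simp only [Finset.mem_filter, Finset.mem_powersetCard, Finset.subset_sdiff,
      ← Finset.disjoint_iff_inter_eq_empty]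
    tauto
  constructor
  · rw [hfilter, Finset.card_powersetCard, Finset.card_powersetCard,
      Finset.card_sdiff_of_subset hMU, hfrac]
    have hC : (0:ℝ) < (n.choose r : ℝ) := by
      exact_mod_cast Nat.choose_pos hrle
    rw [div_pow, div_le_div_iff₀ hC (by positivity)]
    have := choose_mul_pow_le (n - m) n (Nat.sub_le n m) r
    exact_mod_cast this
  · have h01 : 0 ≤ 1 - (m:ℝ) / (n:ℝ) := by
      have : (m:ℝ) / (n:ℝ) ≤ 1 := by
        rw [div_le_one hnR]; exact_mod_cast hmn
      linarith
    have hstep : 1 - (m:ℝ) / (n:ℝ) ≤ Real.exp (-((m:ℝ) / (n:ℝ))) := by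
      have := Real.add_one_le_exp (-((m:ℝ) / (n:ℝ)))
      linarith
    calc (1 - (m:ℝ) / (n:ℝ)) ^ r
        ≤ (Real.exp (-((m:ℝ) / (n:ℝ)))) ^ r := pow_le_pow_left₀ h01 hstep r
      _ = Real.exp ((r:ℝ) * (-((m:ℝ) / (n:ℝ)))) := by rw [Real.exp_nat_mul]
      _ = Real.exp (-(r:ℝ) * (m:ℝ) / (n:ℝ)) := by ring_nf
end
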